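/- Let C be a linear operator on H_out ⊗ H_in (finite-dimensional) such that Tr[C·E] = 1 for every positive semidefinite operator E on H_out ⊗ H_in with Tr_{H_out}[E] = I_{H_in}. Then C = I_{H_out} ⊗ ρ for some operator ρ on H_in with Tr[ρ] = 1. Moreover if C is positive semidefinite then so is ρ. -/

import Mathlib

open Matrix Kronecker BigOperators ComplexOrder

/-- Partial trace over the first tensor factor. -/
noncomputable def ptrFst {o i : Type*} [Fintype o] (M : Matrix (o × i) (o × i) ℂ) :
    Matrix i i ℂ :=
  Matrix.of fun a b => ∑ k, M (k, a) (k, b)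

/-- Partial trace over the second tensor factor. -/
noncomputable def ptrSnd {o i : Type*} [Fintype i] (M : Matrix (o × i) (o × i) ℂ) :
    Matrix o o ℂ :=
  Matrix.of fun a b => ∑ k, M (a, k) (b, k)

/-- Choi operator of a linear map between matrix algebras. -/
noncomputable def choi {i o : Type*} [Fintype i] [DecidableEq i]
    (E : Matrix i i ℂ →ₗ[ℂ] Matrix o o ℂ) : Matrix (o × i) (o × i) ℂ :=
  ∑ m, ∑ n, (E (Matrix.single m n 1)) ⊗ₖ (Matrix.single m n 1)

/-- Complete positivity, expressed via existence of a Kraus decomposition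
(equivalent to the usual definition in finite dimensions). -/
def IsCP {i o : Type*} [Fintype i] [Fintype o]
    (E : Matrix i i ℂ →ₗ[ℂ] Matrix o o ℂ) : Prop :=
  ∃ (k : ℕ) (K : Fin k → Matrix o i ℂ), ∀ X, E X = ∑ j, K j * X * (K j)ᴴ

section Aux

set_option linter.unusedSectionVars false

variable {i o : Type*} [Fintype i] [DecidableEq i] [Fintype o] [DecidableEq o] [Nonempty o]

lemma ptrFst_add (M N : Matrix (o × i) (o × i) ℂ) : ptrFst (M + N) = ptrFst M + ptrFst N := by
  ext a b; simp [ptrFst, Finset.sum_add_distrib]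

lemma ptrFst_sub (M N : Matrix (o × i) (o × i) ℂ) : ptrFst (M - N) = ptrFst M - ptrFst N := by
  ext a b; simp [ptrFst, Finset.sum_sub_distrib]

lemma ptrFst_smul (c : ℂ) (M : Matrix (o × i) (o × i) ℂ) : ptrFst (c • M) = c • ptrFst M := by
  ext a b; simp [ptrFst, Finset.mul_sum]

lemma ptrFst_one : ptrFst (1 : Matrix (o × i) (o × i) ℂ) = (Fintype.card o : ℂ) • 1 := by
  ext a b
  by_cases h : a = b <;>
    simp [ptrFst, one_apply, Prod.ext_iff, h]

lemma ptrFst_std_ne {k l : o} (a b : i) (h : k ≠ l) :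
    ptrFst (single (k,a) (l,b) (1:ℂ)) = 0 := by
  ext a' b'
  simp only [ptrFst, of_apply, single, Prod.mk.injEq, Matrix.zero_apply]
  rw [Finset.sum_eq_zero]
  intro m _
  rw [if_neg]
  rintro ⟨⟨rfl, _⟩, ⟨rfl, _⟩⟩
  exact h rfl

lemma ptrFst_std_eq (k : o) (a b : i) :
    ptrFst (single (k,a) (k,b) (1:ℂ)) = single a b 1 := by
  ext a' b'
  simp only [ptrFst, of_apply, single, Prod.mk.injEq]
  rw [Finset.sum_eq_single k]
  · simp [and_assoc, and_left_comm]
  · intro m _ hm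
    rw [if_neg]; rintro ⟨⟨rfl, _⟩, _⟩; exact hm rfl
  · simp

lemma trace_mul_std (C : Matrix (o × i) (o × i) ℂ) (x y : o × i) :
    (C * single x y (1:ℂ)).trace = C y x := by
  simp [trace, diag, mul_apply, single, ite_and]

lemma std_conjTranspose (x y : o × i) :
    (single x y (1:ℂ))ᴴ = single y x 1 := by
  ext u v
  simp [conjTranspose_apply, single, and_comm]

lemma herm_quad_real {n : Type*} [Fintype n] (H : Matrix n n ℂ) (hH : H.IsHermitian)
    (x : n → ℂ) : (starRingEnd ℂ) (star x ⬝ᵥ H *ᵥ x) = star x ⬝ᵥ H *ᵥ x := by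
  have h : (starRingEnd ℂ) (star x ⬝ᵥ H *ᵥ x) = star (star x ⬝ᵥ H *ᵥ x) := rfl
  rw [h]
  calc star (star x ⬝ᵥ H *ᵥ x) = star (H *ᵥ x) ⬝ᵥ x := by
        rw [star_dotProduct, star_star]
    _ = (star x ᵥ* Hᴴ) ⬝ᵥ x := by rw [star_mulVec]
    _ = star x ⬝ᵥ (Hᴴ *ᵥ x) := (dotProduct_mulVec _ _ _).symm
    _ = star x ⬝ᵥ H *ᵥ x := by rw [hH.eq]

lemma quad_abs_bound {n : Type*} [Fintype n] (H : Matrix n n ℂ) (x : n → ℂ) :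
    ‖star x ⬝ᵥ H *ᵥ x‖ ≤
      (∑ u, ∑ v, ‖H u v‖) * (∑ u, ‖x u‖ ^ 2) := by
  set S := ∑ u, ‖x u‖ ^ 2 with hS
  have hb : ∀ u v : n, ‖x u‖ * ‖x v‖ ≤ S := by
    intro u v
    have h1 : ‖x u‖ ^ 2 ≤ S :=
      Finset.single_le_sum (f := fun w => ‖x w‖ ^ 2)
        (fun w _ => sq_nonneg _) (Finset.mem_univ u)
    have h2 : ‖x v‖ ^ 2 ≤ S :=
      Finset.single_le_sum (f := fun w => ‖x w‖ ^ 2)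
        (fun w _ => sq_nonneg _) (Finset.mem_univ v)
    nlinarith [norm_nonneg (x u), norm_nonneg (x v),
      sq_nonneg (‖x u‖ - ‖x v‖)]
  calc ‖star x ⬝ᵥ H *ᵥ x‖
      = ‖∑ u, star x u * (H *ᵥ x) u‖ := rfl
    _ ≤ ∑ u, ‖star x u * (H *ᵥ x) u‖ := norm_sum_le _ _
    _ ≤ ∑ u, ∑ v, ‖H u v‖ * S := by
        refine Finset.sum_le_sum fun u _ => ?_
        have h1 : ‖star x u * (H *ᵥ x) u‖
            = ‖x u‖ * ‖(H *ᵥ x) u‖ := by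
          simp [norm_mul]
        rw [h1]
        have h2 : ‖(H *ᵥ x) u‖ ≤ ∑ v, ‖H u v‖ * ‖x v‖ := by
          refine le_trans (norm_sum_le _ _) ?_
          exact le_of_eq (Finset.sum_congr rfl fun v _ => norm_mul _ _)
        calc ‖x u‖ * ‖(H *ᵥ x) u‖
            ≤ ‖x u‖ * ∑ v, ‖H u v‖ * ‖x v‖ :=
              mul_le_mul_of_nonneg_left h2 (norm_nonneg _)
          _ = ∑ v, ‖H u v‖ * (‖x u‖ * ‖x v‖) := by
              rw [Finset.mul_sum]; exact Finset.sum_congr rfl fun v _ => by ring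
          _ ≤ ∑ v, ‖H u v‖ * S :=
              Finset.sum_le_sum fun v _ =>
                mul_le_mul_of_nonneg_left (hb u v) (norm_nonneg _)
    _ = (∑ u, ∑ v, ‖H u v‖) * S := by
        simp [Finset.sum_mul]

lemma key_vanish (C : Matrix (o × i) (o × i) ℂ)
    (hC : ∀ E : Matrix (o × i) (o × i) ℂ, E.PosSemidef → ptrFst E = 1 →
      (C * E).trace = 1)
    (H : Matrix (o × i) (o × i) ℂ) (hH : H.IsHermitian) (h0 : ptrFst H = 0) :
    (C * H).trace = 0 := by
  set n : ℕ := Fintype.card o with hn_def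
  have hn : 0 < n := Fintype.card_pos
  have hn' : (1:ℝ) ≤ n := by exact_mod_cast hn
  set M : ℝ := ∑ u, ∑ v, ‖H u v‖ with hM_def
  have hM : 0 ≤ M :=
    Finset.sum_nonneg fun u _ => Finset.sum_nonneg fun v _ => norm_nonneg _
  set ε : ℝ := 1 / (n * (M + 1)) with hε_def
  have hε : 0 < ε := by positivity
  have main : ∀ t : ℝ, |t| ≤ ε →
      (C * (((n:ℂ))⁻¹ • 1 + (t:ℂ) • H)).trace = 1 := by
    intro t ht
    apply hC
    · rw [posSemidef_iff_dotProduct_mulVec]; constructor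
      · show _ = _
        rw [conjTranspose_add, conjTranspose_smul, conjTranspose_smul, conjTranspose_one,
          hH.eq]
        congr 1 <;> congr 1 <;> simp [Complex.star_def, Complex.conj_ofReal]
      · intro x
        rw [add_mulVec, smul_mulVec, smul_mulVec, one_mulVec,
          dotProduct_add, dotProduct_smul, dotProduct_smul]
        set S : ℝ := ∑ u, ‖x u‖ ^ 2 with hS_def
        have hS : 0 ≤ S := Finset.sum_nonneg fun u _ => sq_nonneg _
        have hxx : star x ⬝ᵥ x = (S : ℂ) := by
          rw [hS_def]
          push_cast
          simp only [dotProduct, Pi.star_apply, Complex.star_def]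
          exact Finset.sum_congr rfl fun u _ => by
            rw [mul_comm, Complex.mul_conj, Complex.normSq_eq_norm_sq]; push_cast; ring
        set z : ℂ := star x ⬝ᵥ H *ᵥ x with hz_def
        have hzre : (z.re : ℂ) = z :=
          Complex.conj_eq_iff_re.mp (herm_quad_real H hH x)
        have hzabs : |z.re| ≤ M * S := by
          refine le_trans (Complex.abs_re_le_norm z) ?_
          exact quad_abs_bound H x
        have htz : -(ε * (M * S)) ≤ t * z.re := by
          have h1 : |t * z.re| ≤ ε * (M * S) := by
            rw [abs_mul]
            exact mul_le_mul ht hzabs (abs_nonneg _) (le_of_lt hε)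
          linarith [neg_abs_le (t * z.re)]
        have hreal : (0:ℝ) ≤ (n:ℝ)⁻¹ * S + t * z.re := by
          have hkey : ε * (M * S) ≤ (n:ℝ)⁻¹ * S := by
            rw [hε_def]
            rw [div_mul_eq_mul_div, one_mul, div_le_iff₀ (by positivity)]
            have : (n:ℝ)⁻¹ * S * ((n:ℝ) * (M+1)) = S * (M+1) := by
              field_simp
            rw [this]
            nlinarith
          linarith
        rw [hxx, ← hzre]
        have : (n:ℂ)⁻¹ • (S:ℂ) + (t:ℂ) • ((z.re : ℂ))
            = (((n:ℝ)⁻¹ * S + t * z.re : ℝ) : ℂ) := by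
          push_cast
          simp [smul_eq_mul]
        rw [this]
        exact_mod_cast Complex.zero_le_real.mpr hreal
    · rw [ptrFst_add, ptrFst_smul, ptrFst_smul, ptrFst_one, h0, smul_zero, add_zero,
        smul_smul]
      rw [inv_mul_cancel₀ (by exact_mod_cast hn.ne' : (n:ℂ) ≠ 0), one_smul]
  have texp : ∀ t : ℝ, (C * (((n:ℂ))⁻¹ • 1 + (t:ℂ) • H)).trace
      = (n:ℂ)⁻¹ * C.trace + (t:ℂ) * (C * H).trace := by
    intro t
    rw [mul_add, Matrix.mul_smul, Matrix.mul_smul, mul_one, trace_add, trace_smul,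
      trace_smul, smul_eq_mul, smul_eq_mul]
  have h1 := main ε (by rw [abs_of_pos hε])
  have h2 := main (-ε) (by rw [abs_neg, abs_of_pos hε])
  rw [texp] at h1 h2
  have h3 : ((2*ε : ℝ) : ℂ) * (C*H).trace = 0 := by
    push_cast at h1 h2 ⊢
    linear_combination h1 - h2
  have h4 : ((2*ε : ℝ) : ℂ) ≠ 0 := by
    exact_mod_cast (by positivity : (0:ℝ) < 2*ε).ne'
  exact (mul_eq_zero.mp h3).resolve_left h4


end Aux

/-- If `Tr[C·E] = 1` for every channel Choi operator `E` (i.e. `E ≥ 0`,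
`Tr_out[E] = I`), then `C = I ⊗ ρ` with `Tr[ρ] = 1`; if `C ≥ 0` then also `ρ ≥ 0`. -/
theorem normalization_lemma {i o : Type*} [Fintype i] [DecidableEq i]
    [Fintype o] [DecidableEq o] [Nonempty o]
    (C : Matrix (o × i) (o × i) ℂ)
    (hC : ∀ E : Matrix (o × i) (o × i) ℂ, E.PosSemidef → ptrFst E = 1 →
      (C * E).trace = 1) :
    ∃ ρ : Matrix i i ℂ, ρ.trace = 1 ∧ C = (1 : Matrix o o ℂ) ⊗ₖ ρ ∧
      (C.PosSemidef → ρ.PosSemidef) := by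
  have key := key_vanish C hC
  -- off diagonal (in the first factor) entries vanish
  have hA : ∀ (k l : o) (a b : i), k ≠ l → C (l,b) (k,a) = 0 := by
    intro k l a b hkl
    set x : o × i := (k,a) with hx
    set y : o × i := (l,b) with hy
    have e1 : (C * (single x y 1 + single y x 1)).trace = 0 := by
      apply key
      · show _ = _
        rw [conjTranspose_add, std_conjTranspose, std_conjTranspose, add_comm]
      · rw [ptrFst_add, ptrFst_std_ne _ _ hkl, ptrFst_std_ne _ _ (Ne.symm hkl), add_zero]
    have e2 : (C * (Complex.I • single x y 1
        - Complex.I • single y x 1)).trace = 0 := by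
      apply key
      · show _ = _
        rw [conjTranspose_sub, conjTranspose_smul, conjTranspose_smul,
          std_conjTranspose, std_conjTranspose]
        simp only [Complex.star_def, Complex.conj_I, neg_smul]
        module
      · rw [ptrFst_sub, ptrFst_smul, ptrFst_smul, ptrFst_std_ne _ _ hkl,
          ptrFst_std_ne _ _ (Ne.symm hkl), smul_zero, sub_zero]
    rw [mul_add, trace_add, trace_mul_std, trace_mul_std] at e1
    rw [mul_sub, Matrix.mul_smul, Matrix.mul_smul, trace_sub, trace_smul, trace_smul,
      trace_mul_std, trace_mul_std, smul_eq_mul, smul_eq_mul] at e2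
    have e3 : C y x = C x y :=
      mul_left_cancel₀ Complex.I_ne_zero (sub_eq_zero.mp e2)
    have e4 : (2:ℂ) * C y x = 0 := by linear_combination e1 + e3
    exact (mul_eq_zero.mp e4).resolve_left two_ne_zero
  -- block diagonal entries agree
  have hB : ∀ (k l : o) (a b : i), C (k,a) (k,b) = C (l,a) (l,b) := by
    intro k l a b
    by_cases hkl : k = l
    · subst hkl; rfl
    set x : o × i := (k,b) with hx
    set y : o × i := (k,a) with hy
    set x' : o × i := (l,b) with hx'
    set y' : o × i := (l,a) with hy'
    have e1 : (C * ((single x y 1 + single y x 1)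
        - (single x' y' 1 + single y' x' 1))).trace = 0 := by
      apply key
      · show _ = _
        rw [conjTranspose_sub, conjTranspose_add, conjTranspose_add,
          std_conjTranspose, std_conjTranspose, std_conjTranspose, std_conjTranspose]
        module
      · rw [ptrFst_sub, ptrFst_add, ptrFst_add, ptrFst_std_eq, ptrFst_std_eq,
          ptrFst_std_eq, ptrFst_std_eq, sub_self]
    have e2 : (C * ((Complex.I • single x y 1 - Complex.I • single y x 1)
        - (Complex.I • single x' y' 1
            - Complex.I • single y' x' 1))).trace = 0 := by
      apply key
      · show _ = _
        rw [conjTranspose_sub, conjTranspose_sub, conjTranspose_sub,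
          conjTranspose_smul, conjTranspose_smul, conjTranspose_smul, conjTranspose_smul,
          std_conjTranspose, std_conjTranspose, std_conjTranspose, std_conjTranspose]
        simp only [Complex.star_def, Complex.conj_I, neg_smul]
        module
      · rw [ptrFst_sub, ptrFst_sub, ptrFst_sub, ptrFst_smul, ptrFst_smul, ptrFst_smul,
          ptrFst_smul, ptrFst_std_eq, ptrFst_std_eq, ptrFst_std_eq, ptrFst_std_eq,
          sub_self]
    rw [mul_sub, mul_add, mul_add, trace_sub, trace_add, trace_add,
      trace_mul_std, trace_mul_std, trace_mul_std, trace_mul_std] at e1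
    rw [mul_sub, mul_sub, mul_sub, Matrix.mul_smul, Matrix.mul_smul, Matrix.mul_smul,
      Matrix.mul_smul, trace_sub, trace_sub, trace_sub, trace_smul, trace_smul,
      trace_smul, trace_smul, trace_mul_std, trace_mul_std, trace_mul_std,
      trace_mul_std, smul_eq_mul, smul_eq_mul, smul_eq_mul, smul_eq_mul] at e2
    have e2' : C y x - C x y - (C y' x' - C x' y') = 0 := by
      apply mul_left_cancel₀ Complex.I_ne_zero
      rw [mul_zero]
      linear_combination e2
    show C y x = C y' x'
    linear_combination e1 / 2 + e2' / 2
  -- define ρ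
  set k0 : o := Classical.arbitrary o with hk0
  set ρ : Matrix i i ℂ := Matrix.of (fun a b => C (k0, a) (k0, b)) with hρ
  have hCρ : C = (1 : Matrix o o ℂ) ⊗ₖ ρ := by
    ext ⟨k, a⟩ ⟨l, b⟩
    rw [kroneckerMap_apply]
    by_cases hkl : k = l
    · subst hkl
      rw [one_apply_eq, one_mul]
      exact hB k k0 a b
    · rw [one_apply_ne hkl, zero_mul]
      exact hA l k b a (Ne.symm hkl)
  -- trace of ρ
  set n : ℕ := Fintype.card o with hn_def
  have hn : 0 < n := Fintype.card_pos
  have hone : (C * (((n:ℂ))⁻¹ • 1)).trace = 1 := by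
    apply hC
    · rw [posSemidef_iff_dotProduct_mulVec]; constructor
      · show _ = _
        rw [conjTranspose_smul, conjTranspose_one]
        congr 1
        simp
      · intro x
        rw [smul_mulVec, one_mulVec, dotProduct_smul]
        have h1 : (0:ℂ) ≤ (n:ℂ)⁻¹ := by
          rw [show ((n:ℂ))⁻¹ = (((n:ℝ))⁻¹ : ℝ) by push_cast; ring]
          exact Complex.zero_le_real.mpr (by positivity)
        have h2 : (0:ℂ) ≤ star x ⬝ᵥ x := dotProduct_star_self_nonneg x
        rw [smul_eq_mul]
        exact mul_nonneg h1 h2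
    · rw [ptrFst_smul, ptrFst_one, smul_smul,
        inv_mul_cancel₀ (by exact_mod_cast hn.ne' : (n:ℂ) ≠ 0), one_smul]
  have htraceC : C.trace = (n:ℂ) * ρ.trace := by
    rw [trace, trace]
    rw [Fintype.sum_prod_type]
    have : ∀ k : o, ∑ a : i, C.diag (k, a) = ∑ a : i, ρ.diag a := by
      intro k
      refine Finset.sum_congr rfl fun a _ => ?_
      exact hB k k0 a a
    rw [Finset.sum_congr rfl fun k _ => this k]
    rw [Finset.sum_const, Finset.card_univ, nsmul_eq_mul]
  have hρtrace : ρ.trace = 1 := by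
    rw [Matrix.mul_smul, trace_smul, mul_one, smul_eq_mul, htraceC, ← mul_assoc,
      inv_mul_cancel₀ (by exact_mod_cast hn.ne' : (n:ℂ) ≠ 0), one_mul] at hone
    exact hone
  refine ⟨ρ, hρtrace, hCρ, ?_⟩
  intro hCpsd
  rw [posSemidef_iff_dotProduct_mulVec]; constructor
  · show _ = _
    ext a b
    rw [conjTranspose_apply]
    exact hCpsd.1.apply (k0, a) (k0, b)
  · intro xv
    set y : o × i → ℂ := fun p => if p.1 = k0 then xv p.2 else 0 with hy
    have h2 := hCpsd.dotProduct_mulVec_nonneg y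
    have heq : star y ⬝ᵥ C *ᵥ y = star xv ⬝ᵥ ρ *ᵥ xv := by
      simp only [dotProduct, mulVec, Pi.star_apply, Fintype.sum_prod_type, hy]
      rw [Finset.sum_eq_single k0]
      · refine Finset.sum_congr rfl fun a _ => ?_
        simp only [if_pos rfl]
        congr 1
        rw [Finset.sum_eq_single k0]
        · simp [hρ, dotProduct]
        · intro l _ hl
          simp [hl]
        · simp
      · intro k _ hk
        simp [hk]
      · simp
    rw [heq] at h2
    exact h2
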